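/- For every x ∈ B̄(a,ρ), H(x) is a subgradient of f at x: for every y ∈ B̄(a,ρ), f(y) ≥ f(x) + ⟨H(x), y − x⟩. -/

import Mathlib

open MeasureTheory Metric
open scoped RealInnerProductSpace

/-- Euclidean case of Lemma 4.2. For every `x ∈ B̄(a,ρ)`, `H x` is a
subgradient of `f` at `x`: for every `y ∈ B̄(a,ρ)`, `f y ≥ f x + ⟪H x, y - x⟫`. -/
theorem stmt11 {n : ℕ} (hn : 1 ≤ n) (a : EuclideanSpace ℝ (Fin n)) (ρ : ℝ) (hρ : 0 < ρ)
    (μ : Measure (EuclideanSpace ℝ (Fin n))) [IsProbabilityMeasure μ]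
    (hsupp : {x : EuclideanSpace ℝ (Fin n) | ∀ U ∈ nhds x, 0 < μ U} ⊆ ball a ρ)
    (f : EuclideanSpace ℝ (Fin n) → ℝ)
    (hf : ∀ x, f x = ∫ p, ‖x - p‖ ∂μ)
    (H : EuclideanSpace ℝ (Fin n) → EuclideanSpace ℝ (Fin n))
    (hH : ∀ x, H x = ∫ p in ({x}ᶜ : Set (EuclideanSpace ℝ (Fin n))), ‖x - p‖⁻¹ • (x - p) ∂μ) :
    ∀ x ∈ closedBall a ρ, ∀ y ∈ closedBall a ρ, f y ≥ f x + ⟪H x, y - x⟫ := by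
  -- a.e. points are in the ball
  have hae : ∀ᵐ p ∂μ, p ∈ ball a ρ := by
    rw [ae_iff]
    apply measure_null_of_locally_null
    intro p hp
    have : p ∉ {x : EuclideanSpace ℝ (Fin n) | ∀ U ∈ nhds x, 0 < μ U} := fun h => hp (hsupp h)
    simp only [Set.mem_setOf_eq, not_forall] at this
    obtain ⟨U, hU, hU0⟩ := this
    exact ⟨U, nhdsWithin_le_nhds hU, by simpa using hU0⟩
  intro x hx y hy
  -- Integrability of p ↦ ‖z - p‖
  have hint : ∀ z : EuclideanSpace ℝ (Fin n), Integrable (fun p => ‖z - p‖) μ := by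
    intro z
    refine Integrable.mono' (integrable_const (‖z - a‖ + ρ)) ?_ ?_
    · exact ((continuous_const.sub continuous_id).norm).aestronglyMeasurable
    · filter_upwards [hae] with p hp
      have := mem_ball_iff_norm'.mp hp
      calc ‖(fun p => ‖z - p‖) p‖ = ‖z - p‖ := by simp
        _ ≤ ‖z - a‖ + ‖a - p‖ := norm_sub_le_norm_sub_add_norm_sub z a p
        _ ≤ ‖z - a‖ + ρ := by
            have : ‖a - p‖ ≤ ρ := le_of_lt (by simpa [dist_eq_norm] using mem_ball'.mp hp)
            linarith
  -- the unit vector field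
  set v : EuclideanSpace ℝ (Fin n) → EuclideanSpace ℝ (Fin n) :=
    fun p => ‖x - p‖⁻¹ • (x - p) with hv
  have hvnorm : ∀ p, ‖v p‖ ≤ 1 := by
    intro p
    rcases eq_or_ne p x with rfl | hpx
    · simp [hv]
    · have h0 : x - p ≠ 0 := sub_ne_zero.mpr (Ne.symm hpx)
      have : ‖v p‖ = 1 := by
        rw [hv]; simp [norm_smul, abs_of_nonneg (inv_nonneg.mpr (norm_nonneg _)),
          inv_mul_cancel₀ (norm_ne_zero_iff.mpr h0)]
      linarith
  have hvmeas : Measurable v := by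
    have h1 : Measurable fun p : EuclideanSpace ℝ (Fin n) => ‖x - p‖⁻¹ :=
      ((continuous_const.sub continuous_id).norm).measurable.inv
    exact h1.smul ((continuous_const.sub continuous_id)).measurable
  have hvint : Integrable v (μ.restrict ({x}ᶜ)) := by
    refine Integrable.mono' (integrable_const 1) hvmeas.aestronglyMeasurable ?_
    exact Filter.Eventually.of_forall hvnorm
  -- inner product with integral
  have hinner : ⟪H x, y - x⟫ = ∫ p in ({x}ᶜ : Set (EuclideanSpace ℝ (Fin n))), ⟪v p, y - x⟫ ∂μ := by
    rw [hH, real_inner_comm]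
    rw [← integral_inner hvint (y - x)]
    exact integral_congr_ae (Filter.Eventually.of_forall fun p => real_inner_comm _ _)
  -- rewrite as integral of indicator over μ
  have hms : MeasurableSet ({x}ᶜ : Set (EuclideanSpace ℝ (Fin n))) :=
    (measurableSet_singleton x).compl
  set g : EuclideanSpace ℝ (Fin n) → ℝ :=
    Set.indicator ({x}ᶜ) (fun p => ⟪v p, y - x⟫) with hg
  have hginner : ⟪H x, y - x⟫ = ∫ p, g p ∂μ := by
    rw [hinner, hg, integral_indicator hms]
  have hgmeas : Measurable g := by
    apply Measurable.indicator _ hms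
    have : Measurable fun p => ⟪v p, y - x⟫ := by
      apply Measurable.inner hvmeas measurable_const
    exact this
  have hgbound : ∀ p, |g p| ≤ ‖y - x‖ := by
    intro p
    rw [hg]
    rcases Set.indicator_eq_zero_or_self ({x}ᶜ) (fun p => ⟪v p, y - x⟫) p with h | h <;> rw [h]
    · simp [norm_nonneg]
    · calc |⟪v p, y - x⟫| ≤ ‖v p‖ * ‖y - x‖ := abs_real_inner_le_norm _ _
        _ ≤ 1 * ‖y - x‖ := by
            exact mul_le_mul_of_nonneg_right (hvnorm p) (norm_nonneg _)
        _ = ‖y - x‖ := one_mul _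
  have hgint : Integrable g μ := by
    refine Integrable.mono' (integrable_const ‖y - x‖) hgmeas.aestronglyMeasurable ?_
    exact Filter.Eventually.of_forall fun p => by simpa [Real.norm_eq_abs] using hgbound p
  -- pointwise inequality: ‖y - p‖ ≥ ‖x - p‖ + g p
  have hpt : ∀ p, ‖x - p‖ + g p ≤ ‖y - p‖ := by
    intro p
    rcases eq_or_ne p x with rfl | hpx
    · have : g p = 0 := by
        rw [hg]; apply Set.indicator_of_notMem; simp
      rw [this]
      simp [norm_nonneg]
    · have hgx : g p = ⟪v p, y - x⟫ := by
        rw [hg]; apply Set.indicator_of_mem; simpa using hpx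
      have h0 : x - p ≠ 0 := sub_ne_zero.mpr (Ne.symm hpx)
      have hn0 : ‖x - p‖ ≠ 0 := norm_ne_zero_iff.mpr h0
      have key : ⟪v p, y - x⟫ ≤ ‖y - p‖ - ‖x - p‖ := by
        have expand : (y : EuclideanSpace ℝ (Fin n)) - x = (y - p) - (x - p) := by abel
        rw [hv]
        calc ⟪‖x - p‖⁻¹ • (x - p), y - x⟫
            = ‖x - p‖⁻¹ * ⟪x - p, y - x⟫ := real_inner_smul_left _ _ _
          _ = ‖x - p‖⁻¹ * (⟪x - p, y - p⟫ - ⟪x - p, x - p⟫) := by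
              rw [expand, inner_sub_right]
          _ = ‖x - p‖⁻¹ * ⟪x - p, y - p⟫ - ‖x - p‖⁻¹ * (‖x - p‖ * ‖x - p‖) := by
              rw [real_inner_self_eq_norm_mul_norm]; ring
          _ = ‖x - p‖⁻¹ * ⟪x - p, y - p⟫ - ‖x - p‖ := by
              rw [← mul_assoc, inv_mul_cancel₀ hn0, one_mul]
          _ ≤ ‖x - p‖⁻¹ * (‖x - p‖ * ‖y - p‖) - ‖x - p‖ := by
              have := real_inner_le_norm (x - p) (y - p)
              have hinv : (0:ℝ) ≤ ‖x - p‖⁻¹ := inv_nonneg.mpr (norm_nonneg _)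
              nlinarith
          _ = ‖y - p‖ - ‖x - p‖ := by
              rw [← mul_assoc, inv_mul_cancel₀ hn0, one_mul]
      rw [hgx]; linarith
  -- conclude
  rw [hf x, hf y, hginner]
  have := integral_mono ((hint x).add hgint) (hint y)
    (fun p => by simpa using hpt p)
  simp only [Pi.add_apply] at this
  rw [integral_add (hint x) hgint] at this
  linarith
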